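/- For every square-free integer D > 1, the non-classical binary quadratic form x² + xy + y² over the ring of integers of ℚ(√D) is additively indecomposable; i.e., it cannot be written as a sum of two nonzero totally positive semi-definite integral binary quadratic forms over O_{ℚ(√D)}. -/
import Mathlib


open NumberField

/-- The binary quadratic form `a x² + b xy + c y²` with coefficients in a number
field `K` is totally positive semi-definite: positive semi-definite under every
real embedding of `K`. -/
def TPSDK (K : Type*) [Field K] (a b c : K) : Prop :=
  ∀ σ : K →+* ℝ, ∀ u v : ℝ, 0 ≤ σ a * u ^ 2 + σ b * (u * v) + σ c * v ^ 2

section Aux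

variable {D : ℤ} {K : Type*} [Field K] [NumberField K] {r : K}

/-- `D` has no rational square root. -/
lemma aux_no_rat_sqrt (hsf : Squarefree D) (h1 : 1 < D) (q : ℚ) : q ^ 2 ≠ (D : ℚ) := by
  intro h
  have hint : IsIntegral ℤ q := by
    refine ⟨Polynomial.X ^ 2 - Polynomial.C D, Polynomial.monic_X_pow_sub_C D (by norm_num), ?_⟩
    simp only [Polynomial.eval₂_sub, Polynomial.eval₂_pow, Polynomial.eval₂_X,
      Polynomial.eval₂_C, h, sub_self]
    simp
  obtain ⟨z, hz⟩ := IsIntegrallyClosed.isIntegral_iff.mp hint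
  have hz' : ((z : ℚ)) = q := by rw [← hz]; simp
  have hz2 : z ^ 2 = D := by
    have : ((z : ℚ)) ^ 2 = (D : ℚ) := by rw [hz', h]
    exact_mod_cast this
  have hu : IsUnit z := hsf z ⟨1, by rw [← hz2]; ring⟩
  rcases Int.isUnit_iff.mp hu with h' | h' <;> subst h' <;> omega

/-- Every complex embedding of `K = ℚ(√D)` is real. -/
lemma aux_real_embedding (hsf : Squarefree D) (h1 : 1 < D) (hr : r ^ 2 = (D : K))
    (hdeg : Module.finrank ℚ K = 2) (σ : K →+* ℂ) :
    ∃ ρ : K →+* ℝ, ∀ x : K, (ρ x : ℂ) = σ x := by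
  -- the image of r is real
  have hσr : (σ r) ^ 2 = (D : ℂ) := by
    rw [← map_pow, hr]; push_cast; simp
  have hri : (σ r).im = 0 := by
    by_contra him
    have h2 : (σ r * σ r).im = 0 := by
      rw [← sq, hσr]; simp
    simp only [Complex.mul_im] at h2
    have hre : (σ r).re = 0 := by
      rcases mul_eq_zero.mp (by linarith [h2] : ((σ r).re * (σ r).im) = 0) with h' | h'
      · exact h'
      · exact absurd h' him
    have h3 : (σ r * σ r).re = (D : ℝ) := by
      rw [← sq, hσr]; simp
    simp only [Complex.mul_re, hre] at h3
    nlinarith [sq_nonneg (σ r).im, (by exact_mod_cast h1 : (1:ℝ) < (D:ℝ))]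
  -- {1, r} is a ℚ-basis of K
  have li : LinearIndependent ℚ ![(1 : K), r] := by
    rw [LinearIndependent.pair_iff' (one_ne_zero)]
    intro a ha
    apply aux_no_rat_sqrt hsf h1 a
    have : ((a : K)) ^ 2 = (D : K) := by
      rw [← hr, ← ha]; simp [Rat.smul_def]
    have : (((a ^ 2 : ℚ)) : K) = (((D : ℚ)) : K) := by push_cast; simpa using this
    exact_mod_cast (Rat.cast_injective this)
  have hcard : Fintype.card (Fin 2) = Module.finrank ℚ K := by simp [hdeg]
  let B := basisOfLinearIndependentOfCardEqFinrank li hcard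
  have hB : ⇑B = ![(1 : K), r] := coe_basisOfLinearIndependentOfCardEqFinrank li hcard
  -- every image is real
  have him : ∀ x : K, (σ x).im = 0 := by
    intro x
    have hx : (B.repr x 0) • (1 : K) + (B.repr x 1) • r = x := by
      have := B.sum_repr x
      rwa [Fin.sum_univ_two, hB] at this
      
    rw [← hx]
    simp only [Rat.smul_def, map_add, map_mul, map_ratCast, map_one, mul_one]
    simp [Complex.add_im, Complex.mul_im, hri]
  have hreal : ComplexEmbedding.IsReal σ := by
    rw [ComplexEmbedding.isReal_iff]
    ext x
    simpa [Complex.conj_eq_iff_im] using him x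
  exact ⟨hreal.embedding, fun x => hreal.coe_embedding_apply x⟩

/-- An algebraic integer all of whose real embeddings lie in `[0,1]` is `0` or `1`. -/
lemma aux_zero_or_one (hsf : Squarefree D) (h1 : 1 < D) (hr : r ^ 2 = (D : K))
    (hdeg : Module.finrank ℚ K = 2) (x : 𝓞 K)
    (h : ∀ ρ : K →+* ℝ, 0 ≤ ρ x ∧ ρ x ≤ 1) : x = 0 ∨ x = 1 := by
  set y : 𝓞 K := x * (1 - x) with hy
  have hy0 : y = 0 := by
    by_contra hy0
    -- all infinite places of y are at most 1/4
    have hsmall : ∀ w : InfinitePlace K, w (y : K) ≤ 1 / 4 := by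
      intro w
      obtain ⟨ρ, hρ⟩ := aux_real_embedding hsf h1 hr hdeg w.embedding
      have : w (y : K) = |ρ (y : K)| := by
        rw [← InfinitePlace.norm_embedding_eq, ← hρ]
        simp [Complex.norm_real]
      rw [this]
      have hyval : ρ (y : K) = ρ x * (1 - ρ x) := by
        have : ((y : K)) = (x : K) * (1 - (x : K)) := by push_cast [hy]; ring
        rw [this]; simp [map_mul, map_sub, map_one]
      obtain ⟨h0, h1'⟩ := h ρ
      rw [hyval, abs_of_nonneg (by nlinarith)]
      nlinarith [sq_nonneg (ρ (x : K) - 1/2)]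
    obtain ⟨w⟩ := (inferInstance : Nonempty (InfinitePlace K))
    have h14 : ∀ z : InfinitePlace K, z ≠ w → z y < 1 := fun z _ =>
      lt_of_le_of_lt (hsmall z) (by norm_num)
    have := InfinitePlace.one_le_of_lt_one hy0 h14
    have := hsmall w
    linarith
  have : x * (1 - x) = 0 := hy0
  rcases mul_eq_zero.mp this with h' | h'
  · exact Or.inl h'
  · right; have := sub_eq_zero.mp h'; exact this.symm

/-- If `a = 0` in a TPSD form then `b` vanishes at every real embedding. -/
lemma aux_b_zero {a b c : K} (h : TPSDK K a b c) (ha : a = 0) (ρ : K →+* ℝ) : ρ b = 0 := by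
  by_contra hb
  have h1 := h ρ (-(ρ c + 1) / ρ b) 1
  rw [ha, map_zero] at h1
  have : ρ b * (-(ρ c + 1) / ρ b * 1) = -(ρ c + 1) := by field_simp
  rw [this] at h1
  simp at h1
  linarith

/-- If `c = 0` in a TPSD form then `b` vanishes at every real embedding. -/
lemma aux_b_zero' {a b c : K} (h : TPSDK K a b c) (hc : c = 0) (ρ : K →+* ℝ) : ρ b = 0 := by
  by_contra hb
  have h1 := h ρ 1 (-(ρ a + 1) / ρ b)
  rw [hc, map_zero] at h1
  have : ρ b * (1 * (-(ρ a + 1) / ρ b)) = -(ρ a + 1) := by field_simp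
  rw [this] at h1
  simp at h1
  linarith

/-- Detect zero from all real embeddings. -/
lemma aux_eq_zero (hsf : Squarefree D) (h1 : 1 < D) (hr : r ^ 2 = (D : K))
    (hdeg : Module.finrank ℚ K = 2) (x : 𝓞 K)
    (h : ∀ ρ : K →+* ℝ, ρ x = 0) : x = 0 := by
  obtain ⟨w⟩ := (inferInstance : Nonempty (InfinitePlace K))
  obtain ⟨ρ, _⟩ := aux_real_embedding hsf h1 hr hdeg w.embedding
  have := h ρ
  have hxK : (x : K) = 0 := ρ.injective (by simpa using this)
  exact RingOfIntegers.coe_injective (by simpa using hxK)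

end Aux

/-- For every squarefree `D > 1` and `K = ℚ(√D)`, the non-classical binary
quadratic form `x² + xy + y²` over `𝓞 K` is additively indecomposable: it is not
a sum of two nonzero totally positive semi-definite integral binary forms. -/
theorem stmt3 (D : ℤ) (hsf : Squarefree D) (h1 : 1 < D)
    (K : Type*) [Field K] [NumberField K] (r : K) (hr : r ^ 2 = D)
    (hdeg : Module.finrank ℚ K = 2) :
    ¬ ∃ a₁ b₁ c₁ a₂ b₂ c₂ : 𝓞 K,
      TPSDK K a₁ b₁ c₁ ∧ TPSDK K a₂ b₂ c₂ ∧
      ¬(a₁ = 0 ∧ b₁ = 0 ∧ c₁ = 0) ∧ ¬(a₂ = 0 ∧ b₂ = 0 ∧ c₂ = 0) ∧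
      a₁ + a₂ = 1 ∧ b₁ + b₂ = 1 ∧ c₁ + c₂ = 1 := by
  rintro ⟨a₁, b₁, c₁, a₂, b₂, c₂, hT1, hT2, hn1, hn2, hab, hbb, hcb⟩
  -- coefficient positivity at every real embedding
  have haK : ((a₁ : K)) + (a₂ : K) = 1 := by exact_mod_cast congrArg (algebraMap (𝓞 K) K) hab
  have hbK : ((b₁ : K)) + (b₂ : K) = 1 := by exact_mod_cast congrArg (algebraMap (𝓞 K) K) hbb
  have hcK : ((c₁ : K)) + (c₂ : K) = 1 := by exact_mod_cast congrArg (algebraMap (𝓞 K) K) hcb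
  have ha_pos : ∀ ρ : K →+* ℝ, 0 ≤ ρ a₁ ∧ 0 ≤ ρ a₂ := by
    intro ρ
    have h1' := hT1 ρ 1 0
    have h2' := hT2 ρ 1 0
    constructor <;> [skip; skip] <;> nlinarith [h1', h2']
  have hc_pos : ∀ ρ : K →+* ℝ, 0 ≤ ρ c₁ ∧ 0 ≤ ρ c₂ := by
    intro ρ
    have h1' := hT1 ρ 0 1
    have h2' := hT2 ρ 0 1
    constructor <;> nlinarith [h1', h2']
  have ha1_01 : (a₁ : 𝓞 K) = 0 ∨ (a₁ : 𝓞 K) = 1 := by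
    apply aux_zero_or_one hsf h1 hr hdeg
    intro ρ
    obtain ⟨hp1, hp2⟩ := ha_pos ρ
    have : ρ a₁ + ρ a₂ = 1 := by rw [← map_add, haK]; simp
    constructor <;> linarith
  have hc1_01 : (c₁ : 𝓞 K) = 0 ∨ (c₁ : 𝓞 K) = 1 := by
    apply aux_zero_or_one hsf h1 hr hdeg
    intro ρ
    obtain ⟨hp1, hp2⟩ := hc_pos ρ
    have : ρ c₁ + ρ c₂ = 1 := by rw [← map_add, hcK]; simp
    constructor <;> linarith
  -- helper: coercion of zero
  have coe0 : ∀ x : 𝓞 K, x = 0 → (x : K) = 0 := fun x hx => by rw [hx]; simp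
  -- b vanishing lemmas lifted to 𝓞 K
  have hbvan1 : a₁ = 0 → b₁ = 0 := fun hz =>
    aux_eq_zero hsf h1 hr hdeg b₁ (fun ρ => aux_b_zero hT1 (coe0 _ hz) ρ)
  have hbvan1' : c₁ = 0 → b₁ = 0 := fun hz =>
    aux_eq_zero hsf h1 hr hdeg b₁ (fun ρ => aux_b_zero' hT1 (coe0 _ hz) ρ)
  have hbvan2 : a₂ = 0 → b₂ = 0 := fun hz =>
    aux_eq_zero hsf h1 hr hdeg b₂ (fun ρ => aux_b_zero hT2 (coe0 _ hz) ρ)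
  have hbvan2' : c₂ = 0 → b₂ = 0 := fun hz =>
    aux_eq_zero hsf h1 hr hdeg b₂ (fun ρ => aux_b_zero' hT2 (coe0 _ hz) ρ)
  rcases ha1_01 with ha1 | ha1
  · -- a₁ = 0, so b₁ = 0
    have hb1 : b₁ = 0 := hbvan1 ha1
    rcases hc1_01 with hc1 | hc1
    · exact hn1 ⟨ha1, hb1, hc1⟩
    · -- c₁ = 1 so c₂ = 0 so b₂ = 0, contradicting b₁ + b₂ = 1
      have hc2 : c₂ = 0 := by
        have : c₁ + c₂ = 1 := hcb
        rw [hc1] at this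
        linear_combination this
      have hb2 : b₂ = 0 := hbvan2' hc2
      rw [hb1, hb2] at hbb
      simp at hbb
  · -- a₁ = 1 so a₂ = 0 so b₂ = 0
    have ha2 : a₂ = 0 := by
      have : a₁ + a₂ = 1 := hab
      rw [ha1] at this
      linear_combination this
    have hb2 : b₂ = 0 := hbvan2 ha2
    have hc2_01 : (c₂ : 𝓞 K) = 0 ∨ (c₂ : 𝓞 K) = 1 := by
      apply aux_zero_or_one hsf h1 hr hdeg
      intro ρ
      obtain ⟨hp1, hp2⟩ := hc_pos ρ
      have : ρ c₁ + ρ c₂ = 1 := by rw [← map_add, hcK]; simp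
      constructor <;> linarith
    rcases hc2_01 with hc2 | hc2
    · exact hn2 ⟨ha2, hb2, hc2⟩
    · have hc1 : c₁ = 0 := by
        have : c₁ + c₂ = 1 := hcb
        rw [hc2] at this
        linear_combination this
      have hb1 : b₁ = 0 := hbvan1' hc1
      rw [hb1, hb2] at hbb
      simp at hbb
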